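/- arXiv:2401.02907 — 2 statements merged into one kernel-verified Lean document; each statement's English description precedes it below -/
import Mathlib

section
/- Let U = {(u,v,r,θ) ∈ ℝ⁴ : r ≠ 0} and define the vector fields X₁, X₂, X₃ : U → ℝ⁴ (components in the coordinate order (u,v,r,θ)) by X₁ = (0, 0, −cos θ, sin θ / r), X₂ = (0, 0, sin θ, cos θ / r), X₃ = (0, 0, 0, 1). Then at every point x ∈ U the pointwise Lie brackets satisfy [X₁,X₂](x) = 0, [X₁,X₃](x) = −X₂(x), and [X₂,X₃](x) = X₁(x). -/
/-- Pointwise Lie bracket of vector fields on ℝ⁴: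
`[V,W](x) = (DW)(x)(V(x)) − (DV)(x)(W(x))`. -/
noncomputable def lieBracket4 (V W : (Fin 4 → ℝ) → (Fin 4 → ℝ)) (x : Fin 4 → ℝ) :
    Fin 4 → ℝ :=
  fderiv ℝ W x (V x) - fderiv ℝ V x (W x)

/- Coordinates are `(u, v, r, θ) = (x 0, x 1, x 2, x 3)`. -/

noncomputable def E2X₁ : (Fin 4 → ℝ) → (Fin 4 → ℝ) := fun x =>
  ![0, 0, -Real.cos (x 3), Real.sin (x 3) / x 2]

noncomputable def E2X₂ : (Fin 4 → ℝ) → (Fin 4 → ℝ) := fun x =>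
  ![0, 0, Real.sin (x 3), Real.cos (x 3) / x 2]

noncomputable def E2X₃ : (Fin 4 → ℝ) → (Fin 4 → ℝ) := fun _ =>
  ![0, 0, 0, 1]

noncomputable def pr4 (i : Fin 4) : (Fin 4 → ℝ) →L[ℝ] ℝ :=
  ContinuousLinearMap.proj i

noncomputable def L1 (x : Fin 4 → ℝ) : (Fin 4 → ℝ) →L[ℝ] (Fin 4 → ℝ) :=
  ContinuousLinearMap.pi
    ![0, 0, Real.sin (x 3) • pr4 3,
      (Real.cos (x 3) / x 2) • pr4 3 - (Real.sin (x 3) / (x 2) ^ 2) • pr4 2]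

noncomputable def L2 (x : Fin 4 → ℝ) : (Fin 4 → ℝ) →L[ℝ] (Fin 4 → ℝ) :=
  ContinuousLinearMap.pi
    ![0, 0, Real.cos (x 3) • pr4 3,
      (-Real.sin (x 3) / x 2) • pr4 3 - (Real.cos (x 3) / (x 2) ^ 2) • pr4 2]

lemma comp_sin (x : Fin 4 → ℝ) :
    HasFDerivAt (fun y : Fin 4 → ℝ => Real.sin (y 3)) (Real.cos (x 3) • pr4 3) x :=
  (Real.hasDerivAt_sin (x 3)).comp_hasFDerivAt (f := fun y : Fin 4 → ℝ => y 3) x (hasFDerivAt_apply 3 x)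

lemma comp_cos (x : Fin 4 → ℝ) :
    HasFDerivAt (fun y : Fin 4 → ℝ => Real.cos (y 3)) ((-Real.sin (x 3)) • pr4 3) x :=
  (Real.hasDerivAt_cos (x 3)).comp_hasFDerivAt (f := fun y : Fin 4 → ℝ => y 3) x (hasFDerivAt_apply 3 x)

lemma comp_negcos (x : Fin 4 → ℝ) :
    HasFDerivAt (fun y : Fin 4 → ℝ => -Real.cos (y 3)) (Real.sin (x 3) • pr4 3) x := by
  have := (comp_cos x).neg
  refine this.congr_fderiv ?_
  ext v
  simp [pr4]

lemma comp_inv2 (x : Fin 4 → ℝ) (hx : x 2 ≠ 0) :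
    HasFDerivAt (fun y : Fin 4 → ℝ => (y 2)⁻¹) ((-((x 2) ^ 2)⁻¹) • pr4 2) x :=
  (hasDerivAt_inv hx).comp_hasFDerivAt x (hasFDerivAt_apply 2 x)

lemma comp_sin_div (x : Fin 4 → ℝ) (hx : x 2 ≠ 0) :
    HasFDerivAt (fun y : Fin 4 → ℝ => Real.sin (y 3) / y 2)
      ((Real.cos (x 3) / x 2) • pr4 3 - (Real.sin (x 3) / (x 2) ^ 2) • pr4 2) x := by
  have h := (comp_sin x).mul (comp_inv2 x hx)
  simp only [div_eq_mul_inv]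
  refine h.congr_fderiv ?_
  ext v
  simp [pr4]
  field_simp
  ring

lemma comp_cos_div (x : Fin 4 → ℝ) (hx : x 2 ≠ 0) :
    HasFDerivAt (fun y : Fin 4 → ℝ => Real.cos (y 3) / y 2)
      ((-Real.sin (x 3) / x 2) • pr4 3 - (Real.cos (x 3) / (x 2) ^ 2) • pr4 2) x := by
  have h := (comp_cos x).mul (comp_inv2 x hx)
  simp only [div_eq_mul_inv]
  refine h.congr_fderiv ?_
  ext v
  simp [pr4]
  field_simp
  ring

lemma hasFDerivAt_E2X₁ (x : Fin 4 → ℝ) (hx : x 2 ≠ 0) :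
    HasFDerivAt E2X₁ (L1 x) x := by
  rw [hasFDerivAt_pi']
  intro i
  fin_cases i
  · exact hasFDerivAt_const 0 x
  · exact hasFDerivAt_const 0 x
  · exact comp_negcos x
  · exact comp_sin_div x hx

lemma hasFDerivAt_E2X₂ (x : Fin 4 → ℝ) (hx : x 2 ≠ 0) :
    HasFDerivAt E2X₂ (L2 x) x := by
  rw [hasFDerivAt_pi']
  intro i
  fin_cases i
  · exact hasFDerivAt_const 0 x
  · exact hasFDerivAt_const 0 x
  · exact comp_sin x
  · exact comp_cos_div x hx

theorem stmt_2 (x : Fin 4 → ℝ) (hx : x 2 ≠ 0) :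
    lieBracket4 E2X₁ E2X₂ x = 0 ∧
    lieBracket4 E2X₁ E2X₃ x = -(E2X₂ x) ∧
    lieBracket4 E2X₂ E2X₃ x = E2X₁ x := by
  have h1 := (hasFDerivAt_E2X₁ x hx).fderiv
  have h2 := (hasFDerivAt_E2X₂ x hx).fderiv
  have h3 : fderiv ℝ E2X₃ x = 0 := fderiv_const_apply _
  refine ⟨?_, ?_, ?_⟩ <;> funext i <;> fin_cases i <;>
    simp [lieBracket4, h1, h2, h3, E2X₁, E2X₂, E2X₃, L1, L2, pr4] <;>
    (try field_simp) <;> (try ring)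
end

section
/- Let h : ℝ⁴ → (4×4 real matrices) be a differentiable vierbein field (entries h^a_μ, with a the frame index and μ the coordinate index), let X : ℝ⁴ → ℝ⁴ be a differentiable vector field, and let M : ℝ⁴ → (4×4 real matrices) satisfy (M(x))ᵀ η + η M(x) = 0 for every x (i.e., M(x) lies in the Lorentz Lie algebra). Suppose X is an affine frame symmetry generator in the sense that for all x, a, μ: Σ_ν X^ν(x) ∂_ν h^a_μ(x) + Σ_ν ∂_μ X^ν(x) h^a_ν(x) = Σ_b M(x)^a_b h^b_μ(x). Define the metric components g_{μν}(x) = Σ_{a,b} η_{ab} h^a_μ(x) h^b_ν(x). Then X is a Killing vector field of g: for all x, μ, σ, Σ_ν X^ν(x) ∂_ν g_{μσ}(x) + Σ_ν ∂_μ X^ν(x) g_{νσ}(x) + Σ_ν ∂_σ X^ν(x) g_{μν}(x) = 0. -/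
open Matrix Finset

/-- The Minkowski matrix diag(−1,1,1,1). -/
def ηM : Matrix (Fin 4) (Fin 4) ℝ :=
  !![-1, 0, 0, 0; 0, 1, 0, 0; 0, 0, 1, 0; 0, 0, 0, 1]

/-- The μ-th partial derivative of a function on ℝ⁴. -/
noncomputable def pd (f : (Fin 4 → ℝ) → ℝ) (μ : Fin 4) (x : Fin 4 → ℝ) : ℝ :=
  fderiv ℝ f x (Pi.single μ 1)

lemma pd_mul' (f g : (Fin 4 → ℝ) → ℝ) (x : Fin 4 → ℝ) (ν : Fin 4)
    (hf : DifferentiableAt ℝ f x) (hg : DifferentiableAt ℝ g x) :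
    pd (fun y => f y * g y) ν x = pd f ν x * g x + f x * pd g ν x := by
  unfold pd
  rw [fderiv_fun_mul hf hg]
  simp only [ContinuousLinearMap.add_apply, ContinuousLinearMap.smul_apply, smul_eq_mul]
  ring

lemma pd_const_mul' (c : ℝ) (f : (Fin 4 → ℝ) → ℝ) (x : Fin 4 → ℝ) (ν : Fin 4)
    (hf : DifferentiableAt ℝ f x) :
    pd (fun y => c * f y) ν x = c * pd f ν x := by
  unfold pd
  rw [fderiv_const_mul hf]
  simp

lemma pd_sum' {ι : Type*} (s : Finset ι) (f : ι → (Fin 4 → ℝ) → ℝ) (x : Fin 4 → ℝ) (ν : Fin 4)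
    (hf : ∀ i ∈ s, DifferentiableAt ℝ (f i) x) :
    pd (fun y => ∑ i ∈ s, f i y) ν x = ∑ i ∈ s, pd (f i) ν x := by
  unfold pd
  rw [fderiv_fun_sum hf]
  simp

lemma etaM_diag : ηM = Matrix.diagonal ![(-1:ℝ),1,1,1] := by
  ext i j
  fin_cases i <;> fin_cases j <;> simp [ηM, Matrix.diagonal, Matrix.vecHead, Matrix.vecTail]

/-- An affine frame symmetry generator is a Killing vector field of the metric
built from the vierbein. -/
theorem stmt_14
    (h : (Fin 4 → ℝ) → Fin 4 → Fin 4 → ℝ)    -- vierbein components h^a_μ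
    (X : (Fin 4 → ℝ) → Fin 4 → ℝ)            -- vector field components X^ν
    (M : (Fin 4 → ℝ) → Matrix (Fin 4) (Fin 4) ℝ)
    (hdiff : ∀ a μ, Differentiable ℝ (fun x => h x a μ))
    (hXdiff : ∀ ν, Differentiable ℝ (fun x => X x ν))
    (hM : ∀ x, (M x)ᵀ * ηM + ηM * M x = 0)
    (hsym : ∀ x a μ,
      (∑ ν, X x ν * pd (fun y => h y a μ) ν x)
        + (∑ ν, pd (fun y => X y ν) μ x * h x a ν)
      = ∑ b, M x a b * h x b μ)
    (g : (Fin 4 → ℝ) → Fin 4 → Fin 4 → ℝ)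
    (hg : ∀ x μ ν, g x μ ν = ∑ a, ∑ b, ηM a b * h x a μ * h x b ν) :
    ∀ x μ σ,
      (∑ ν, X x ν * pd (fun y => g y μ σ) ν x)
        + (∑ ν, pd (fun y => X y ν) μ x * g x ν σ)
        + (∑ ν, pd (fun y => X y ν) σ x * g x μ ν) = 0 := by
  intro x μ σ
  -- derivative of the metric
  have hpdg : ∀ ν, pd (fun y => g y μ σ) ν x
      = ∑ a, ∑ b, ηM a b * (pd (fun y => h y a μ) ν x * h x b σ
          + h x a μ * pd (fun y => h y b σ) ν x) := by
    intro ν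
    have hfun : (fun y => g y μ σ) = fun y => ∑ a, ∑ b, ηM a b * h y a μ * h y b σ :=
      funext fun y => hg y μ σ
    rw [hfun]
    rw [pd_sum' _ _ _ _ (fun a _ => DifferentiableAt.fun_sum
        (fun b _ => (((hdiff a μ).const_mul (ηM a b)).fun_mul (hdiff b σ)).differentiableAt))]
    refine Finset.sum_congr rfl fun a _ => ?_
    rw [pd_sum' _ _ _ _
        (fun b _ => (((hdiff a μ).const_mul (ηM a b)).fun_mul (hdiff b σ)).differentiableAt)]
    refine Finset.sum_congr rfl fun b _ => ?_
    rw [show (fun y => ηM a b * h y a μ * h y b σ)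
        = (fun y => (fun y => ηM a b * h y a μ) y * (fun y => h y b σ) y) from rfl]
    rw [pd_mul' _ _ _ _ ((hdiff a μ).const_mul (ηM a b)).differentiableAt
        (hdiff b σ).differentiableAt]
    rw [pd_const_mul' _ _ _ _ (hdiff a μ).differentiableAt]
    ring
  -- Lie algebra relations
  have K : ∀ b c : Fin 4, M x b c * ηM b b + ηM c c * M x c b = 0 := by
    intro b c
    have h0 := congrFun (congrFun (hM x) c) b
    rw [etaM_diag] at h0
    simp only [Matrix.add_apply, Matrix.mul_diagonal, Matrix.diagonal_mul,
      Matrix.transpose_apply, Matrix.zero_apply, Matrix.diagonal_apply_eq, etaM_diag] at h0 ⊢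
    linarith
  have K00 : M x 0 0 = 0 := by have := K 0 0; norm_num [ηM] at this; linarith
  have K11 : M x 1 1 = 0 := by have := K 1 1; norm_num [ηM] at this; linarith
  have K22 : M x 2 2 = 0 := by have := K 2 2; norm_num [ηM, Matrix.cons_val_two, Matrix.cons_val_three] at this; linarith
  have K33 : M x 3 3 = 0 := by have := K 3 3; norm_num [ηM, Matrix.cons_val_two, Matrix.cons_val_three] at this; linarith
  have K10 : M x 1 0 = M x 0 1 := by have := K 1 0; norm_num [ηM] at this; linarith
  have K20 : M x 2 0 = M x 0 2 := by have := K 2 0; norm_num [ηM, Matrix.cons_val_two, Matrix.cons_val_three] at this; linarith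
  have K30 : M x 3 0 = M x 0 3 := by have := K 3 0; norm_num [ηM, Matrix.cons_val_two, Matrix.cons_val_three] at this; linarith
  have K21 : M x 2 1 = -M x 1 2 := by have := K 2 1; norm_num [ηM, Matrix.cons_val_two, Matrix.cons_val_three] at this; linarith
  have K31 : M x 3 1 = -M x 1 3 := by have := K 3 1; norm_num [ηM, Matrix.cons_val_two, Matrix.cons_val_three] at this; linarith
  have K32 : M x 3 2 = -M x 2 3 := by have := K 3 2; norm_num [ηM, Matrix.cons_val_two, Matrix.cons_val_three] at this; linarith
  -- expanded symmetry hypotheses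
  have Hμ0 := hsym x 0 μ; have Hμ1 := hsym x 1 μ
  have Hμ2 := hsym x 2 μ; have Hμ3 := hsym x 3 μ
  have Hσ0 := hsym x 0 σ; have Hσ1 := hsym x 1 σ
  have Hσ2 := hsym x 2 σ; have Hσ3 := hsym x 3 σ
  simp only [Fin.sum_univ_four] at Hμ0 Hμ1 Hμ2 Hμ3 Hσ0 Hσ1 Hσ2 Hσ3
  simp only [hpdg]
  simp only [hg, Fin.sum_univ_four]
  norm_num [ηM, Matrix.vecHead, Matrix.vecTail, Matrix.cons_val_two, Matrix.cons_val_three]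
  linear_combination
    (-(h x 0 σ)) * Hμ0 + h x 1 σ * Hμ1 + h x 2 σ * Hμ2 + h x 3 σ * Hμ3
    + (-(h x 0 μ)) * Hσ0 + h x 1 μ * Hσ1 + h x 2 μ * Hσ2 + h x 3 μ * Hσ3
    + (h x 0 σ * h x 1 μ + h x 0 μ * h x 1 σ) * K10
    + (h x 0 σ * h x 2 μ + h x 0 μ * h x 2 σ) * K20
    + (h x 0 σ * h x 3 μ + h x 0 μ * h x 3 σ) * K30
    + (h x 1 σ * h x 2 μ + h x 1 μ * h x 2 σ) * K21
    + (h x 1 σ * h x 3 μ + h x 1 μ * h x 3 σ) * K31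
    + (h x 2 σ * h x 3 μ + h x 2 μ * h x 3 σ) * K32
    + (-2 * h x 0 μ * h x 0 σ) * K00
    + (2 * h x 1 μ * h x 1 σ) * K11
    + (2 * h x 2 μ * h x 2 σ) * K22
    + (2 * h x 3 μ * h x 3 σ) * K33
end
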